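/- For every real α > 4 sin^2(π / (2(T+1))), there exists a function u : {0, 1, ..., T+1} → ℝ with u(0) = u(T+1) = 0 and u(k) > 0 for all k ∈ {1, ..., T}, such that -(u(k+1) - 2u(k) + u(k-1)) = α · u(k) / (1 + u(k)^2) for all k ∈ {1, ..., T}. -/

import Mathlib

open Real Finset Filter

namespace Esempio

noncomputable def ext (T : ℕ) (v : Fin T → ℝ) : ℕ → ℝ := fun k =>
  if h : 1 ≤ k ∧ k ≤ T then v ⟨k - 1, by omega⟩ else 0

noncomputable def Jf (T : ℕ) (α : ℝ) (v : Fin T → ℝ) : ℝ :=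
  (∑ k ∈ Finset.range (T + 1), (ext T v (k + 1) - ext T v k) ^ 2) / 2
    - α / 2 * ∑ k ∈ Finset.Icc 1 T, Real.log (1 + ext T v k ^ 2)

lemma ext_zero (T : ℕ) (v : Fin T → ℝ) : ext T v 0 = 0 := by simp [ext]

lemma ext_top (T : ℕ) (v : Fin T → ℝ) : ext T v (T + 1) = 0 := by
  have : ¬(1 ≤ T + 1 ∧ T + 1 ≤ T) := by omega
  simp [ext, this]

lemma ext_coe (T : ℕ) (v : Fin T → ℝ) (i : Fin T) : ext T v (i + 1) = v i := by
  have hi : (1 : ℕ) ≤ i + 1 ∧ i + 1 ≤ T := ⟨by omega, by omega⟩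
  simp [ext, hi]

lemma ext_of_mem (T : ℕ) (v : Fin T → ℝ) {k : ℕ} (h1 : 1 ≤ k) (h2 : k ≤ T) :
    ext T v k = v ⟨k - 1, by omega⟩ := by
  simp [ext, h1, h2]

lemma sum_Icc_eq_sum_range_shift (T : ℕ) (g : ℕ → ℝ) :
    ∑ k ∈ Finset.Icc 1 T, g k = ∑ k ∈ Finset.range T, g (k + 1) := by
  induction T with
  | zero => simp
  | succ n ih => rw [Finset.sum_Icc_succ_top (by omega), ih, Finset.sum_range_succ]

-- Abel-type summation identity
lemma abel_key (u : ℕ → ℝ) (n : ℕ) :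
    ∑ k ∈ Finset.range n, (u (k + 1) - u k) ^ 2
      = (∑ k ∈ Finset.range n, u (k + 1) * (2 * u (k + 1) - u (k + 2) - u k))
        + u (n + 1) * u n - u n ^ 2 + (u 0 ^ 2 - u 0 * u 1) := by
  induction n with
  | zero => simp; ring
  | succ n ih =>
      rw [Finset.sum_range_succ, Finset.sum_range_succ, ih]; ring

lemma abel (T : ℕ) (u : ℕ → ℝ) (h0 : u 0 = 0) (hT : u (T + 1) = 0) :
    ∑ k ∈ Finset.range (T + 1), (u (k + 1) - u k) ^ 2
      = ∑ k ∈ Finset.Icc 1 T, u k * (2 * u k - u (k + 1) - u (k - 1)) := by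
  have h1 : ∑ k ∈ Finset.Icc 1 T, u k * (2 * u k - u (k + 1) - u (k - 1))
      = ∑ k ∈ Finset.range T, u (k + 1) * (2 * u (k + 1) - u (k + 2) - u k) := by
    rw [sum_Icc_eq_sum_range_shift]
    simp only [Nat.add_sub_cancel]
  rw [h1, abel_key u (T + 1), Finset.sum_range_succ, hT, h0]
  ring

lemma ext_update (T : ℕ) (v : Fin T → ℝ) {j : ℕ} (h1 : 1 ≤ j) (h2 : j ≤ T) (t : ℝ) (k : ℕ) :
    ext T (Function.update v ⟨j - 1, by omega⟩ t) k = if k = j then t else ext T v k := by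
  by_cases hk : 1 ≤ k ∧ k ≤ T
  · rw [ext_of_mem _ _ hk.1 hk.2]
    by_cases hkj : k = j
    · subst hkj
      rw [if_pos rfl]
      exact Function.update_self _ _ _
    · have hne : (⟨k - 1, by omega⟩ : Fin T) ≠ ⟨j - 1, by omega⟩ := by
        simp only [ne_eq, Fin.mk.injEq]; omega
      rw [Function.update_of_ne hne, if_neg hkj, ext_of_mem _ _ hk.1 hk.2]
  · have hkj : k ≠ j := by omega
    simp only [ext, dif_neg hk, if_neg hkj]

lemma J_update (T : ℕ) (α : ℝ) (v : Fin T → ℝ) {j : ℕ} (h1 : 1 ≤ j) (h2 : j ≤ T) (t : ℝ) :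
    Jf T α (Function.update v ⟨j - 1, by omega⟩ t)
      = Jf T α v
        + ((ext T v (j + 1) - t) ^ 2 + (t - ext T v (j - 1)) ^ 2
           - (ext T v (j + 1) - ext T v j) ^ 2 - (ext T v j - ext T v (j - 1)) ^ 2) / 2
        - α / 2 * (Real.log (1 + t ^ 2) - Real.log (1 + ext T v j ^ 2)) := by
  set u := ext T v with hu
  set w := ext T (Function.update v ⟨j - 1, by omega⟩ t) with hwdef
  have hw : ∀ k, w k = if k = j then t else u k := fun k => ext_update T v h1 h2 t k
  have hwj : w j = t := by rw [hw]; simp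
  have hwne : ∀ k, k ≠ j → w k = u k := fun k hk => by rw [hw, if_neg hk]
  -- Q part
  have hQ : ∑ k ∈ Finset.range (T + 1), (w (k + 1) - w k) ^ 2
      = (∑ k ∈ Finset.range (T + 1), (u (k + 1) - u k) ^ 2)
        + ((u (j + 1) - t) ^ 2 + (t - u (j - 1)) ^ 2
           - (u (j + 1) - u j) ^ 2 - (u j - u (j - 1)) ^ 2) := by
    have hsub : ({j - 1, j} : Finset ℕ) ⊆ Finset.range (T + 1) := by
      intro x hx; simp at hx ⊢; omega
    have hzero : ∀ x ∈ Finset.range (T + 1), x ∉ ({j - 1, j} : Finset ℕ) →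
        ((w (x + 1) - w x) ^ 2 - (u (x + 1) - u x) ^ 2) = 0 := by
      intro x hx hxs
      simp only [Finset.mem_insert, Finset.mem_singleton] at hxs
      push_neg at hxs
      rw [hwne x (by omega), hwne (x + 1) (by omega)]; ring
    have hpair := Finset.sum_subset hsub hzero
    have hne : j - 1 ≠ j := by omega
    rw [Finset.sum_pair hne] at hpair
    have hsplit : ∑ k ∈ Finset.range (T + 1), ((w (k + 1) - w k) ^ 2 - (u (k + 1) - u k) ^ 2)
        = ((w (j - 1 + 1) - w (j - 1)) ^ 2 - (u (j - 1 + 1) - u (j - 1)) ^ 2)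
          + ((w (j + 1) - w j) ^ 2 - (u (j + 1) - u j) ^ 2) := hpair.symm
    rw [Finset.sum_sub_distrib] at hsplit
    have e1 : j - 1 + 1 = j := by omega
    rw [e1, hwj, hwne (j - 1) (by omega), hwne (j + 1) (by omega)] at hsplit
    linarith [hsplit]
  -- P part
  have hP : ∑ k ∈ Finset.Icc 1 T, Real.log (1 + w k ^ 2)
      = (∑ k ∈ Finset.Icc 1 T, Real.log (1 + u k ^ 2))
        + (Real.log (1 + t ^ 2) - Real.log (1 + u j ^ 2)) := by
    have hsub : ({j} : Finset ℕ) ⊆ Finset.Icc 1 T := by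
      intro x hx; simp at hx ⊢; omega
    have hzero : ∀ x ∈ Finset.Icc 1 T, x ∉ ({j} : Finset ℕ) →
        (Real.log (1 + w x ^ 2) - Real.log (1 + u x ^ 2)) = 0 := by
      intro x hx hxs
      simp only [Finset.mem_singleton] at hxs
      rw [hwne x hxs]; ring
    have hpair := Finset.sum_subset hsub hzero
    rw [Finset.sum_singleton] at hpair
    rw [Finset.sum_sub_distrib] at hpair
    rw [hwj] at hpair
    linarith [hpair]
  simp only [Jf, ← hwdef, ← hu, hQ, hP]
  ring

lemma continuous_ext (T : ℕ) (k : ℕ) : Continuous fun v : Fin T → ℝ => ext T v k := by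
  unfold ext
  by_cases h : 1 ≤ k ∧ k ≤ T
  · simp only [dif_pos h]; exact continuous_apply _
  · simp only [dif_neg h]; exact continuous_const

lemma continuous_Jf (T : ℕ) (α : ℝ) : Continuous (Jf T α) := by
  unfold Jf
  apply Continuous.sub
  · apply Continuous.div_const
    apply continuous_finset_sum
    intro k _
    exact ((continuous_ext T (k + 1)).sub (continuous_ext T k)).pow 2
  · apply Continuous.mul continuous_const
    apply continuous_finset_sum
    intro k _
    apply Continuous.log
    · exact continuous_const.add ((continuous_ext T k).pow 2)
    · intro v; positivity

lemma log_le_two_mul (r : ℝ) (hr : 0 ≤ r) : Real.log (1 + r ^ 2) ≤ 2 * r := by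
  have h1 : Real.log (1 + r ^ 2) ≤ Real.log ((1 + r) ^ 2) := by
    apply Real.log_le_log (by positivity)
    nlinarith
  have h2 : Real.log ((1 + r) ^ 2) = 2 * Real.log (1 + r) := by
    rw [Real.log_pow]; push_cast; ring
  have h3 : Real.log (1 + r) ≤ (1 + r) - 1 := Real.log_le_sub_one_of_pos (by positivity)
  linarith

lemma Jf_lower (T : ℕ) (α : ℝ) (hα0 : 0 ≤ α) (v : Fin T → ℝ) :
    ‖v‖ ^ 2 / (2 * (T + 1)) - α * T * ‖v‖ ≤ Jf T α v := by
  set u := ext T v with hu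
  set A := ∑ k ∈ Finset.range (T + 1), |u (k + 1) - u k| with hA
  have hA0 : 0 ≤ A := Finset.sum_nonneg fun k _ => abs_nonneg _
  -- each coordinate bounded by A
  have hcoord : ∀ i : Fin T, ‖v i‖ ≤ A := by
    intro i
    have h0 : u 0 = 0 := by rw [hu]; exact ext_zero T v
    have htel : u ((i : ℕ) + 1) = ∑ k ∈ Finset.range ((i : ℕ) + 1), (u (k + 1) - u k) := by
      rw [Finset.sum_range_sub u ((i : ℕ) + 1), h0, sub_zero]
    have h1 : ‖v i‖ = |u ((i : ℕ) + 1)| := by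
      rw [hu, ext_coe, Real.norm_eq_abs]
    rw [h1, htel]
    calc |∑ k ∈ Finset.range ((i : ℕ) + 1), (u (k + 1) - u k)|
        ≤ ∑ k ∈ Finset.range ((i : ℕ) + 1), |u (k + 1) - u k| :=
          Finset.abs_sum_le_sum_abs _ _
      _ ≤ A := by
          apply Finset.sum_le_sum_of_subset_of_nonneg
          · apply Finset.range_subset_range.2; omega
          · intro k _ _; exact abs_nonneg _
  have hnormA : ‖v‖ ≤ A := pi_norm_le_iff_of_nonneg hA0 |>.2 hcoord
  -- Cauchy-Schwarz
  have hCS : A ^ 2 ≤ (T + 1) * ∑ k ∈ Finset.range (T + 1), (u (k + 1) - u k) ^ 2 := by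
    have := sq_sum_le_card_mul_sum_sq (s := Finset.range (T + 1))
      (f := fun k => |u (k + 1) - u k|)
    simp only [Finset.card_range, sq_abs] at this
    calc A ^ 2 ≤ ((T + 1 : ℕ) : ℝ) * ∑ k ∈ Finset.range (T + 1), (u (k + 1) - u k) ^ 2 := this
      _ = (T + 1) * ∑ k ∈ Finset.range (T + 1), (u (k + 1) - u k) ^ 2 := by push_cast; ring
  have hQ : ‖v‖ ^ 2 / (T + 1) ≤ ∑ k ∈ Finset.range (T + 1), (u (k + 1) - u k) ^ 2 := by
    rw [div_le_iff₀ (by positivity)]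
    have h1 : ‖v‖ ^ 2 ≤ A ^ 2 := by
      apply pow_le_pow_left₀ (norm_nonneg _) hnormA
    nlinarith
  -- log part
  have hPk : ∀ k ∈ Finset.Icc 1 T, Real.log (1 + u k ^ 2) ≤ 2 * ‖v‖ := by
    intro k hk
    simp only [Finset.mem_Icc] at hk
    rw [hu, ext_of_mem T v hk.1 hk.2]
    set r := |v ⟨k - 1, by omega⟩| with hr
    have hrv : r ≤ ‖v‖ := norm_le_pi_norm v _
    calc Real.log (1 + v ⟨k - 1, by omega⟩ ^ 2) = Real.log (1 + r ^ 2) := by rw [hr, sq_abs]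
      _ ≤ 2 * r := log_le_two_mul r (abs_nonneg _)
      _ ≤ 2 * ‖v‖ := by linarith
  have hP : ∑ k ∈ Finset.Icc 1 T, Real.log (1 + u k ^ 2) ≤ T * (2 * ‖v‖) := by
    calc ∑ k ∈ Finset.Icc 1 T, Real.log (1 + u k ^ 2)
        ≤ ∑ k ∈ Finset.Icc 1 T, 2 * ‖v‖ := Finset.sum_le_sum hPk
      _ = (Finset.Icc 1 T).card * (2 * ‖v‖) := by rw [Finset.sum_const]; simp [nsmul_eq_mul]
      _ = T * (2 * ‖v‖) := by rw [Nat.card_Icc]; push_cast; ring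
  unfold Jf
  rw [← hu]
  have h2 : α / 2 * ∑ k ∈ Finset.Icc 1 T, Real.log (1 + u k ^ 2) ≤ α / 2 * (T * (2 * ‖v‖)) := by
    apply mul_le_mul_of_nonneg_left hP (by linarith)
  have h3 : ‖v‖ ^ 2 / (2 * (T + 1)) ≤ (∑ k ∈ Finset.range (T + 1), (u (k + 1) - u k) ^ 2) / 2 := by
    rw [div_le_div_iff₀ (by positivity) (by norm_num)]
    calc ‖v‖ ^ 2 * 2 = (‖v‖^2 / (T+1)) * (2 * (T+1)) := by
          field_simp
      _ ≤ (∑ k ∈ Finset.range (T + 1), (u (k + 1) - u k) ^ 2) * (2 * (T + 1)) := by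
          apply mul_le_mul_of_nonneg_right hQ (by positivity)
  nlinarith [h2, h3]

lemma Jf_coercive (T : ℕ) (α : ℝ) (hα0 : 0 ≤ α) :
    Filter.Tendsto (Jf T α) (Filter.cocompact (Fin T → ℝ)) Filter.atTop := by
  have hG : Filter.Tendsto (fun r : ℝ => r ^ 2 / (2 * (T + 1)) - α * T * r) Filter.atTop
      Filter.atTop := by
    apply Filter.tendsto_atTop_mono' _ _ Filter.tendsto_id
    filter_upwards [Filter.eventually_ge_atTop (2 * (T + 1) * (α * T + 1))] with r hr
    have hr0 : 0 ≤ r := le_trans (by positivity) hr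
    have : (α * T + 1) * r ≤ r ^ 2 / (2 * (T + 1)) := by
      rw [le_div_iff₀ (by positivity)]
      nlinarith
    simp only [id]
    nlinarith
  have hnorm : Filter.Tendsto (fun v : Fin T → ℝ => ‖v‖) (Filter.cocompact _) Filter.atTop :=
    tendsto_norm_cocompact_atTop
  exact Filter.tendsto_atTop_mono (fun v => Jf_lower T α hα0 v) (hG.comp hnorm)

lemma euler (T : ℕ) (α : ℝ) (v : Fin T → ℝ) (hmin : ∀ w, Jf T α v ≤ Jf T α w)
    {j : ℕ} (h1 : 1 ≤ j) (h2 : j ≤ T) :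
    -(ext T v (j + 1) - 2 * ext T v j + ext T v (j - 1))
      = α * (ext T v j / (1 + ext T v j ^ 2)) := by
  set a := ext T v (j - 1) with ha
  set b := ext T v (j + 1) with hb
  set t₀ := ext T v j with ht₀
  set C : ℝ := Jf T α v - ((b - t₀) ^ 2 + (t₀ - a) ^ 2) / 2
      + α / 2 * Real.log (1 + t₀ ^ 2) with hC
  set h : ℝ → ℝ := fun t =>
    C + (b - t) ^ 2 / 2 + (t - a) ^ 2 / 2 - α / 2 * Real.log (1 + t ^ 2) with hh
  have hht : ∀ t, Jf T α (Function.update v ⟨j - 1, by omega⟩ t) = h t := by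
    intro t
    rw [J_update T α v h1 h2 t, hh, hC]
    simp only [← ha, ← hb, ← ht₀]
    ring
  have hglob : ∀ t, h t₀ ≤ h t := by
    intro t
    have e0 : h t₀ = Jf T α v := by rw [hh, hC]; ring
    rw [e0, ← hht t]
    exact hmin _
  have hloc : IsLocalMin h t₀ := Filter.Eventually.of_forall hglob
  have hne : (1 : ℝ) + t₀ ^ 2 ≠ 0 := by positivity
  have hderiv : HasDerivAt h ((t₀ - b) + (t₀ - a) - α * (t₀ / (1 + t₀ ^ 2))) t₀ := by
    have p1 : HasDerivAt (fun t : ℝ => (b - t) ^ 2 / 2) (t₀ - b) t₀ := by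
      have := (((hasDerivAt_id t₀).const_sub b).pow 2).div_const 2
      refine this.congr_deriv ?_
      norm_num [id]
      ring
    have p2 : HasDerivAt (fun t : ℝ => (t - a) ^ 2 / 2) (t₀ - a) t₀ := by
      have := (((hasDerivAt_id t₀).sub_const a).pow 2).div_const 2
      refine this.congr_deriv ?_
      norm_num [id]
    have hin : HasDerivAt (fun t : ℝ => 1 + t ^ 2) (2 * t₀) t₀ := by
      have := ((hasDerivAt_id t₀).pow 2).const_add 1
      refine this.congr_deriv ?_
      norm_num [id]
    have p3 : HasDerivAt (fun t : ℝ => α / 2 * Real.log (1 + t ^ 2))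
        (α * (t₀ / (1 + t₀ ^ 2))) t₀ := by
      have hlog : HasDerivAt (fun t : ℝ => Real.log (1 + t ^ 2))
          (1 / (1 + t₀ ^ 2) * (2 * t₀)) t₀ := by
        have hc := (Real.hasDerivAt_log hne).comp t₀ hin
        simp only [Function.comp_def] at hc
        refine hc.congr_deriv ?_
        field_simp
      have := hlog.const_mul (α / 2)
      refine this.congr_deriv ?_
      field_simp
    exact ((p1.const_add C).add p2).sub p3
  have hz := hloc.hasDerivAt_eq_zero hderiv
  have hpos : (0:ℝ) < 1 + t₀ ^ 2 := by positivity
  linarith [hz]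

lemma ext_abs (T : ℕ) (v : Fin T → ℝ) (k : ℕ) :
    ext T (fun i => |v i|) k = |ext T v k| := by
  unfold ext
  split_ifs with h
  · rfl
  · simp

lemma Jf_abs_le (T : ℕ) (α : ℝ) (v : Fin T → ℝ) :
    Jf T α (fun i => |v i|) ≤ Jf T α v := by
  unfold Jf
  have hQ : ∑ k ∈ Finset.range (T + 1),
        (ext T (fun i => |v i|) (k + 1) - ext T (fun i => |v i|) k) ^ 2
      ≤ ∑ k ∈ Finset.range (T + 1), (ext T v (k + 1) - ext T v k) ^ 2 := by
    apply Finset.sum_le_sum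
    intro k _
    rw [ext_abs, ext_abs]
    set x := ext T v (k + 1); set y := ext T v k
    have h1 : |x| - |y| ≤ |x - y| := abs_sub_abs_le_abs_sub _ _
    have h2 : |y| - |x| ≤ |x - y| := by
      rw [abs_sub_comm]; exact abs_sub_abs_le_abs_sub _ _
    calc (|x| - |y|) ^ 2 ≤ |x - y| ^ 2 := sq_le_sq' (by linarith) h1
      _ = (x - y) ^ 2 := sq_abs _
  have hP : ∑ k ∈ Finset.Icc 1 T, Real.log (1 + ext T (fun i => |v i|) k ^ 2)
      = ∑ k ∈ Finset.Icc 1 T, Real.log (1 + ext T v k ^ 2) := by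
    refine Finset.sum_congr rfl fun k _ => ?_
    rw [ext_abs, sq_abs]
  rw [hP]
  linarith

lemma log_lb (x : ℝ) (hx : 0 ≤ x) : x - x ^ 2 ≤ Real.log (1 + x) := by
  have hpos : (0:ℝ) < 1 + x := by linarith
  have h1 : Real.log (1 + x)⁻¹ ≤ (1 + x)⁻¹ - 1 :=
    Real.log_le_sub_one_of_pos (by positivity)
  rw [Real.log_inv] at h1
  have h2 : x / (1 + x) ≤ Real.log (1 + x) := by
    have : (1 + x)⁻¹ - 1 = -(x / (1 + x)) := by field_simp; ring
    linarith [h1, this ▸ h1]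
  have h3 : x - x ^ 2 ≤ x / (1 + x) := by
    rw [le_div_iff₀ hpos]
    nlinarith
  linarith

set_option maxHeartbeats 1000000 in
lemma exists_neg (T : ℕ) (hT : 1 ≤ T) (α : ℝ)
    (hα : 4 * Real.sin (Real.pi / (2 * ((T : ℝ) + 1))) ^ 2 < α) :
    ∃ v : Fin T → ℝ, Jf T α v < 0 := by
  set θ : ℝ := Real.pi / ((T : ℝ) + 1) with hθ
  set lam : ℝ := 4 * Real.sin (Real.pi / (2 * ((T : ℝ) + 1))) ^ 2 with hlam
  have hT1 : (0:ℝ) < (T : ℝ) + 1 := by positivity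
  have hθpos : 0 < θ := by rw [hθ]; positivity
  have hθlt : θ < Real.pi := by
    rw [hθ]
    apply div_lt_self Real.pi_pos
    have : (1:ℝ) ≤ (T:ℝ) := by exact_mod_cast hT
    linarith
  have hsinθ : 0 < Real.sin θ := Real.sin_pos_of_pos_of_lt_pi hθpos hθlt
  have hα0 : 0 < α := lt_of_le_of_lt (by positivity) hα
  -- lam = 2 - 2 cos θ
  have hhalf : θ / 2 = Real.pi / (2 * ((T : ℝ) + 1)) := by
    rw [hθ, div_div, mul_comm]
  have hlam' : lam = 2 - 2 * Real.cos θ := by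
    have hcos : Real.cos θ = 2 * Real.cos (θ / 2) ^ 2 - 1 := by
      have := Real.cos_two_mul (θ / 2)
      rw [show 2 * (θ / 2) = θ by ring] at this
      linarith
    have hsc := Real.sin_sq_add_cos_sq (θ / 2)
    rw [hlam, ← hhalf]
    nlinarith
  set S : ℝ := ∑ k ∈ Finset.Icc 1 T, Real.sin ((k : ℝ) * θ) ^ 2 with hS
  have hSpos : 0 < S := by
    have h1mem : 1 ∈ Finset.Icc 1 T := by simp [hT]
    have hterm : 0 < Real.sin ((1 : ℕ) * θ) ^ 2 := by
      push_cast; rw [one_mul]; positivity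
    calc (0:ℝ) < Real.sin ((1 : ℕ) * θ) ^ 2 := hterm
      _ ≤ S := Finset.single_le_sum (f := fun k : ℕ => Real.sin ((k : ℝ) * θ) ^ 2)
          (fun k _ => sq_nonneg _) h1mem
  have hαlam : lam < α := hα
  set ε : ℝ := Real.sqrt ((α - lam) * S / (2 * α * T)) with hε
  have hfrac : 0 < (α - lam) * S / (2 * α * T) := by
    apply div_pos (by nlinarith)
    have : (0:ℝ) < (T:ℝ) := by exact_mod_cast hT
    positivity
  have hεpos : 0 < ε := Real.sqrt_pos.2 hfrac
  have hε2 : ε ^ 2 = (α - lam) * S / (2 * α * T) := Real.sq_sqrt hfrac.le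
  set v : Fin T → ℝ := fun i => ε * Real.sin (((i : ℕ) + 1 : ℝ) * θ) with hv
  set u := ext T v with hu
  have huval : ∀ k : ℕ, k ≤ T + 1 → u k = ε * Real.sin ((k : ℝ) * θ) := by
    intro k hk
    rcases Nat.eq_zero_or_pos k with h0 | h1
    · subst h0; rw [hu, ext_zero]; simp
    rcases Nat.lt_or_ge k (T + 1) with hlt | hge
    · have h2 : k ≤ T := by omega
      rw [hu, ext_of_mem T v h1 h2, hv]
      simp only
      congr 2
      have : ((k - 1 : ℕ) : ℝ) = (k : ℝ) - 1 := by
        rw [Nat.cast_sub h1]; simp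
      rw [this]; ring
    · have hk1 : k = T + 1 := by omega
      subst hk1
      rw [hu, ext_top]
      have : ((T + 1 : ℕ) : ℝ) * θ = Real.pi := by
        rw [hθ]; push_cast; field_simp
      rw [this, Real.sin_pi, mul_zero]
  -- Q computation
  have hQ : ∑ k ∈ Finset.range (T + 1), (u (k + 1) - u k) ^ 2
      = ε ^ 2 * ((2 - 2 * Real.cos θ) * S) := by
    rw [abel T u (by rw [hu]; exact ext_zero T v) (by rw [hu]; exact ext_top T v)]
    have : ∀ k ∈ Finset.Icc 1 T,
        u k * (2 * u k - u (k + 1) - u (k - 1))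
          = ε ^ 2 * ((2 - 2 * Real.cos θ) * Real.sin ((k : ℝ) * θ) ^ 2) := by
      intro k hk
      simp only [Finset.mem_Icc] at hk
      rw [huval k (by omega), huval (k + 1) (by omega), huval (k - 1) (by omega)]
      have hc1 : ((k + 1 : ℕ) : ℝ) = (k : ℝ) + 1 := by push_cast; ring
      have hc2 : ((k - 1 : ℕ) : ℝ) = (k : ℝ) - 1 := by
        rw [Nat.cast_sub hk.1]; simp
      rw [hc1, hc2]
      have hadd : Real.sin (((k : ℝ) + 1) * θ)
          = Real.sin ((k : ℝ) * θ) * Real.cos θ + Real.cos ((k : ℝ) * θ) * Real.sin θ := by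
        rw [show ((k : ℝ) + 1) * θ = (k : ℝ) * θ + θ by ring, Real.sin_add]
      have hsub : Real.sin (((k : ℝ) - 1) * θ)
          = Real.sin ((k : ℝ) * θ) * Real.cos θ - Real.cos ((k : ℝ) * θ) * Real.sin θ := by
        rw [show ((k : ℝ) - 1) * θ = (k : ℝ) * θ - θ by ring, Real.sin_sub]
      rw [hadd, hsub]
      ring
    rw [Finset.sum_congr rfl this]
    simp only [← Finset.mul_sum]
    rfl
  -- P lower bound
  have hP : ε ^ 2 * S - (T : ℝ) * ε ^ 4
      ≤ ∑ k ∈ Finset.Icc 1 T, Real.log (1 + u k ^ 2) := by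
    have hterm : ∀ k ∈ Finset.Icc 1 T,
        ε ^ 2 * Real.sin ((k : ℝ) * θ) ^ 2 - ε ^ 4 ≤ Real.log (1 + u k ^ 2) := by
      intro k hk
      simp only [Finset.mem_Icc] at hk
      rw [huval k (by omega)]
      set x : ℝ := (ε * Real.sin ((k : ℝ) * θ)) ^ 2 with hx
      have hx0 : 0 ≤ x := sq_nonneg _
      have hlog := log_lb x hx0
      have hxval : x = ε ^ 2 * Real.sin ((k : ℝ) * θ) ^ 2 := by rw [hx]; ring
      have hsin1 : Real.sin ((k : ℝ) * θ) ^ 2 ≤ 1 := Real.sin_sq_le_one _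
      have hx2 : x ^ 2 ≤ ε ^ 4 := by
        rw [hxval]
        have h1 : ε ^ 2 * Real.sin ((k : ℝ) * θ) ^ 2 ≤ ε ^ 2 * 1 := by nlinarith
        nlinarith [sq_nonneg (Real.sin ((k:ℝ)*θ)), sq_nonneg ε, sq_nonneg (ε^2)]
      nlinarith [hlog]
    calc ε ^ 2 * S - (T : ℝ) * ε ^ 4
        = ∑ k ∈ Finset.Icc 1 T, (ε ^ 2 * Real.sin ((k : ℝ) * θ) ^ 2 - ε ^ 4) := by
          rw [Finset.sum_sub_distrib, ← Finset.mul_sum, ← hS, Finset.sum_const, Nat.card_Icc]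
          simp [nsmul_eq_mul]
      _ ≤ ∑ k ∈ Finset.Icc 1 T, Real.log (1 + u k ^ 2) := Finset.sum_le_sum hterm
  refine ⟨v, ?_⟩
  have hJ : Jf T α v ≤ ε ^ 2 * ((2 - 2 * Real.cos θ) * S) / 2
      - α / 2 * (ε ^ 2 * S - (T : ℝ) * ε ^ 4) := by
    unfold Jf
    rw [← hu, hQ]
    have := mul_le_mul_of_nonneg_left hP (by linarith : (0:ℝ) ≤ α / 2)
    linarith
  have hfinal : ε ^ 2 * ((2 - 2 * Real.cos θ) * S) / 2
      - α / 2 * (ε ^ 2 * S - (T : ℝ) * ε ^ 4) < 0 := by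
    have hTε : α * (T : ℝ) * ε ^ 2 = (α - lam) * S / 2 := by
      rw [hε2]
      have hTne : (T : ℝ) ≠ 0 := by
        have : (0:ℝ) < (T:ℝ) := by exact_mod_cast hT
        linarith
      field_simp
    have hε4 : ε ^ 4 = ε ^ 2 * ε ^ 2 := by ring
    -- expression = (ε²/2) * ((lam - α) S + α T ε²)
    have hexp : ε ^ 2 * ((2 - 2 * Real.cos θ) * S) / 2
        - α / 2 * (ε ^ 2 * S - (T : ℝ) * ε ^ 4)
        = ε ^ 2 / 2 * ((lam - α) * S + α * (T : ℝ) * ε ^ 2) := by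
      rw [hlam', hε4]; ring
    rw [hexp, hTε]
    have hneg : (lam - α) * S + (α - lam) * S / 2 = -((α - lam) * S / 2) := by ring
    rw [hneg]
    have : 0 < (α - lam) * S / 2 := by nlinarith
    nlinarith [sq_nonneg ε, hεpos]
  linarith

lemma Jf_zero (T : ℕ) (α : ℝ) : Jf T α (fun _ => 0) = 0 := by
  have hext0 : ∀ k, ext T (fun _ => (0:ℝ)) k = 0 := by
    intro k; unfold ext; split_ifs <;> simp
  unfold Jf
  simp [hext0]

end Esempio

open Esempio in
theorem example_second_order_existence
    (T : ℕ) (hT : 2 ≤ T)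
    (α : ℝ) (hα : 4 * Real.sin (Real.pi / (2 * ((T : ℝ) + 1))) ^ 2 < α) :
    ∃ u : ℕ → ℝ, u 0 = 0 ∧ u (T + 1) = 0 ∧
      (∀ k ∈ Finset.Icc 1 T, 0 < u k) ∧
      (∀ k ∈ Finset.Icc 1 T,
        -(u (k + 1) - 2 * u k + u (k - 1)) = α * (u k / (1 + (u k) ^ 2))) := by
  have hsin : 0 < Real.sin (Real.pi / (2 * ((T : ℝ) + 1))) := by
    apply Real.sin_pos_of_pos_of_lt_pi
    · positivity
    · apply div_lt_self Real.pi_pos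
      have : (1:ℝ) ≤ (T:ℝ) := by exact_mod_cast (by omega : 1 ≤ T)
      linarith
  have hα0 : (0:ℝ) ≤ α := le_of_lt (lt_of_le_of_lt (by positivity) hα)
  obtain ⟨v₀, hv₀⟩ := (continuous_Jf T α).exists_forall_le (Jf_coercive T α hα0)
  set w : Fin T → ℝ := fun i => |v₀ i| with hw
  have hwmin : ∀ z, Jf T α w ≤ Jf T α z := fun z => le_trans (Jf_abs_le T α v₀) (hv₀ z)
  set u := ext T w with hu
  have hunn : ∀ k, 0 ≤ u k := by
    intro k
    rw [hu]; unfold Esempio.ext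
    split_ifs with h
    · rw [hw]; exact abs_nonneg _
    · exact le_rfl
  have heq : ∀ k ∈ Finset.Icc 1 T,
      -(u (k + 1) - 2 * u k + u (k - 1)) = α * (u k / (1 + u k ^ 2)) := by
    intro k hk
    simp only [Finset.mem_Icc] at hk
    exact euler T α w hwmin hk.1 hk.2
  obtain ⟨vt, hvt⟩ := exists_neg T (by omega) α hα
  have hJneg : Jf T α w < 0 := lt_of_le_of_lt (hwmin vt) hvt
  have hpos : ∀ k ∈ Finset.Icc 1 T, 0 < u k := by
    by_contra hcon
    push_neg at hcon
    obtain ⟨k₀, hk₀mem, hk₀le⟩ := hcon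
    have hk₀0 : u k₀ = 0 := le_antisymm hk₀le (hunn k₀)
    simp only [Finset.mem_Icc] at hk₀mem
    have step : ∀ m, 1 ≤ m → m ≤ T → u m = 0 → u (m - 1) = 0 ∧ u (m + 1) = 0 := by
      intro m h1 h2 hm
      have he := heq m (by simp only [Finset.mem_Icc]; omega)
      rw [hm] at he
      simp only [mul_zero, zero_mul, sub_zero, zero_div, zero_pow, mul_zero] at he
      have he' : u (m + 1) + u (m - 1) = 0 := by linarith
      have h3 := hunn (m - 1)
      have h4 := hunn (m + 1)
      constructor <;> linarith
    have hdown : ∀ d, d ≤ k₀ - 1 → u (k₀ - d) = 0 := by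
      intro d
      induction d with
      | zero => intro _; simpa using hk₀0
      | succ n ih =>
          intro hn
          have h := step (k₀ - n) (by omega) (by omega) (ih (by omega))
          have e : k₀ - (n + 1) = (k₀ - n) - 1 := by omega
          rw [e]
          exact h.1
    have hu1 : u 1 = 0 := by
      have := hdown (k₀ - 1) le_rfl
      rwa [show k₀ - (k₀ - 1) = 1 by omega] at this
    have hup : ∀ m, 1 ≤ m → m ≤ T → u m = 0 := by
      intro m
      induction m with
      | zero => intro h; omega
      | succ n ih =>
          intro h1 h2
          rcases Nat.eq_zero_or_pos n with h0 | hn1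
          · subst h0; exact hu1
          · have hn : u n = 0 := ih (by omega) (by omega)
            exact (step n (by omega) (by omega) hn).2
    have hw0 : w = fun _ => (0:ℝ) := by
      funext i
      have h := hup ((i : ℕ) + 1) (by omega) (by omega)
      rw [hu, ext_coe] at h
      exact h
    have hJ0 : Jf T α w = 0 := by rw [hw0]; exact Jf_zero T α
    linarith
  exact ⟨u, ext_zero T w, ext_top T w, hpos, heq⟩
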